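/- Let X have a density bounded by a constant K, and suppose there exist β > 0 and δ > 0 such that ∑_{n=1}^∞ P(n (log n)^{1+β} |X_n − X| ≥ δ) < ∞. Then for every x ∈ ℝ, ∑_{n=1}^∞ |F_n(x) − F(x)| < ∞, where F_n and F are the CDFs of X_n and X. -/

import Mathlib

open MeasureTheory

lemma bertrand_summable {β : ℝ} (hβ : 0 < β) :
    Summable (fun n : ℕ => (((n : ℝ)) * Real.log (max (n : ℝ) 2) ^ (1 + β))⁻¹) := by
  set g : ℕ → ℝ := fun n => (((n : ℝ)) * Real.log (max (n : ℝ) 2) ^ (1 + β))⁻¹ with hg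
  have hlog2 : (0:ℝ) < Real.log 2 := Real.log_pos one_lt_two
  have hnonneg : ∀ n, 0 ≤ g n := by
    intro n
    apply inv_nonneg.2
    apply mul_nonneg (Nat.cast_nonneg n)
    exact Real.rpow_nonneg (Real.log_nonneg (le_trans (by norm_num) (le_max_right _ _))) _
  have hmono : ∀ ⦃m n : ℕ⦄, 0 < m → m ≤ n → g n ≤ g m := by
    intro m n hm hmn
    apply inv_anti₀
    · apply mul_pos (by exact_mod_cast hm)
      exact Real.rpow_pos_of_pos (lt_of_lt_of_le hlog2
        (Real.log_le_log (by norm_num) (le_max_right _ _))) _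
    · apply mul_le_mul (by exact_mod_cast hmn)
      · apply Real.rpow_le_rpow (Real.log_nonneg (le_trans (by norm_num) (le_max_right _ _)))
        · exact Real.log_le_log (lt_of_lt_of_le (by norm_num) (le_max_right _ _))
            (max_le_max (by exact_mod_cast hmn) le_rfl)
        · positivity
      · exact Real.rpow_nonneg (Real.log_nonneg (le_trans (by norm_num) (le_max_right _ _))) _
      · exact Nat.cast_nonneg n
  rw [← summable_condensed_iff_of_nonneg hnonneg hmono]
  rw [← summable_nat_add_iff 1]
  have key : ∀ k : ℕ, (2:ℝ) ^ (k+1) * g (2 ^ (k+1)) =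
      (Real.log 2) ^ (-(1+β)) * ((k:ℝ)+1) ^ (-(1+β)) := by
    intro k
    have h2 : ((2:ℕ):ℝ) ^ (k+1) = (2:ℝ)^(k+1) := by push_cast; ring
    have hmax : max (((2:ℕ):ℝ) ^ (k+1)) 2 = (2:ℝ)^(k+1) := by
      rw [h2]; exact max_eq_left (le_self_pow₀ (by norm_num) (by omega))
    simp only [hg, Nat.cast_pow, Nat.cast_ofNat]
    rw [max_eq_left (le_self_pow₀ (by norm_num : (1:ℝ) ≤ 2) (by omega)), Real.log_pow]
    push_cast
    rw [Real.mul_rpow (by positivity) hlog2.le, Real.rpow_neg hlog2.le,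
      Real.rpow_neg (by positivity : (0:ℝ) ≤ (k:ℝ)+1)]
    have hpow : (0:ℝ) < (2:ℝ)^(k+1) := by positivity
    have hp1 : (0:ℝ) < ((k:ℝ)+1)^(1+β) := by positivity
    have hp2 : (0:ℝ) < Real.log 2 ^ (1+β) := by positivity
    field_simp
  apply Summable.congr _ (fun k => (key k).symm)
  apply Summable.mul_left
  have hs : Summable (fun n : ℕ => (n:ℝ) ^ (-(1+β))) := Real.summable_nat_rpow.2 (by linarith)
  have := (summable_nat_add_iff 1).2 hs
  exact this.congr (fun k => by push_cast; ring_nf)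

lemma cdf_incr {Ω : Type*} [MeasurableSpace Ω] (P : Measure Ω) [IsProbabilityMeasure P]
    (X0 : Ω → ℝ) (hmeas0 : Measurable X0) (f : ℝ → ℝ) (K : ℝ) (hK' : 0 ≤ K)
    (hdens : Measure.map X0 P = volume.withDensity (fun x => ENNReal.ofReal (f x)))
    (hK : ∀ x, f x ≤ K) (a b : ℝ) (hab : a ≤ b) :
    (P {ω | X0 ω ≤ b}).toReal ≤ (P {ω | X0 ω ≤ a}).toReal + K * (b - a) := by
  have hIoc : P (X0 ⁻¹' Set.Ioc a b) ≤ ENNReal.ofReal (K * (b - a)) := by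
    rw [← Measure.map_apply hmeas0 measurableSet_Ioc, hdens,
      withDensity_apply _ measurableSet_Ioc]
    calc ∫⁻ x in Set.Ioc a b, ENNReal.ofReal (f x)
        ≤ ∫⁻ _x in Set.Ioc a b, ENNReal.ofReal K :=
          lintegral_mono (fun x => ENNReal.ofReal_le_ofReal (hK x))
      _ = ENNReal.ofReal K * volume (Set.Ioc a b) := setLIntegral_const _ _
      _ = ENNReal.ofReal (K * (b - a)) := by
          rw [Real.volume_Ioc, ← ENNReal.ofReal_mul hK']
  have hsub : {ω | X0 ω ≤ b} ⊆ {ω | X0 ω ≤ a} ∪ X0 ⁻¹' Set.Ioc a b := by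
    intro ω hω
    rcases le_or_gt (X0 ω) a with h1 | h1
    · exact Or.inl h1
    · exact Or.inr ⟨h1, hω⟩
  have key : P {ω | X0 ω ≤ b} ≤ P {ω | X0 ω ≤ a} + ENNReal.ofReal (K * (b - a)) :=
    (measure_mono hsub).trans ((measure_union_le _ _).trans (add_le_add le_rfl hIoc))
  have := ENNReal.toReal_mono (by finiteness) key
  rwa [ENNReal.toReal_add (by finiteness) (by finiteness),
    ENNReal.toReal_ofReal (mul_nonneg hK' (by linarith))] at this

lemma key_ineq {Ω : Type*} [MeasurableSpace Ω] (P : Measure Ω) [IsProbabilityMeasure P]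
    (Y : Ω → ℝ) (X0 : Ω → ℝ) (hmeasY : Measurable Y) (hmeas0 : Measurable X0)
    (f : ℝ → ℝ) (K : ℝ) (hK0 : 0 ≤ K)
    (hdens : Measure.map X0 P = volume.withDensity (fun x => ENNReal.ofReal (f x)))
    (hK : ∀ x, f x ≤ K) (δ : ℝ) (hδ : 0 < δ) (c : ℝ) (hc : 0 < c) (x : ℝ) :
    |(P {ω | Y ω ≤ x}).toReal - (P {ω | X0 ω ≤ x}).toReal| ≤
      (P {ω | δ ≤ c * |Y ω - X0 ω|}).toReal + K * (δ / c) := by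
  set ε := δ / c with hε
  have hεpos : 0 < ε := div_pos hδ hc
  set A := {ω | δ ≤ c * |Y ω - X0 ω|} with hA
  have hcomp : ∀ ω, ω ∉ A → |Y ω - X0 ω| < ε := by
    intro ω hω
    have : c * |Y ω - X0 ω| < δ := lt_of_not_ge hω
    rw [hε, lt_div_iff₀ hc]
    linarith [this, mul_comm c |Y ω - X0 ω|]
  have h1 : P {ω | Y ω ≤ x} ≤ P {ω | X0 ω ≤ x + ε} + P A := by
    refine (measure_mono ?_).trans (measure_union_le _ _)
    intro ω hω
    by_cases hωA : ω ∈ A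
    · exact Or.inr hωA
    · left
      have := hcomp ω hωA
      have := abs_lt.1 this
      simp only [Set.mem_setOf_eq] at hω ⊢
      linarith [this.1, this.2]
  have h2 : P {ω | X0 ω ≤ x - ε} ≤ P {ω | Y ω ≤ x} + P A := by
    refine (measure_mono ?_).trans (measure_union_le _ _)
    intro ω hω
    by_cases hωA : ω ∈ A
    · exact Or.inr hωA
    · left
      have := abs_lt.1 (hcomp ω hωA)
      simp only [Set.mem_setOf_eq] at hω ⊢
      linarith [this.1, this.2]
  have r1 : (P {ω | Y ω ≤ x}).toReal ≤ (P {ω | X0 ω ≤ x + ε}).toReal + (P A).toReal := by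
    have := ENNReal.toReal_mono (by finiteness) h1
    rwa [ENNReal.toReal_add (by finiteness) (by finiteness)] at this
  have r2 : (P {ω | X0 ω ≤ x - ε}).toReal ≤ (P {ω | Y ω ≤ x}).toReal + (P A).toReal := by
    have := ENNReal.toReal_mono (by finiteness) h2
    rwa [ENNReal.toReal_add (by finiteness) (by finiteness)] at this
  have i1 : (P {ω | X0 ω ≤ x + ε}).toReal ≤ (P {ω | X0 ω ≤ x}).toReal + K * ε := by
    have := cdf_incr P X0 hmeas0 f K hK0 hdens hK x (x + ε) (by linarith)
    simpa using this
  have i2 : (P {ω | X0 ω ≤ x}).toReal ≤ (P {ω | X0 ω ≤ x - ε}).toReal + K * ε := by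
    have := cdf_incr P X0 hmeas0 f K hK0 hdens hK (x - ε) x (by linarith)
    have h3 : x - (x - ε) = ε := by ring
    rwa [h3] at this
  rw [abs_sub_le_iff]
  constructor <;> linarith

/-- If `X` has a density bounded by `K` and
`∑ₙ P(n (log n)^{1+β} |Xₙ − X| ≥ δ) < ∞` for some `β, δ > 0`, then for every `x`,
`∑ₙ |Fₙ(x) − F(x)| < ∞`. -/
theorem stmt15 {Ω : Type*} [MeasurableSpace Ω] (P : Measure Ω) [IsProbabilityMeasure P]
    (X : ℕ → Ω → ℝ) (X0 : Ω → ℝ)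
    (hmeas : ∀ n, Measurable (X n)) (hmeas0 : Measurable X0)
    (f : ℝ → ℝ) (K : ℝ)
    (hdens : Measure.map X0 P = volume.withDensity (fun x => ENNReal.ofReal (f x)))
    (hK : ∀ x, f x ≤ K)
    (β δ : ℝ) (hβ : 0 < β) (hδ : 0 < δ)
    (h : Summable (fun n : ℕ =>
      (P {ω | δ ≤ ((n : ℝ) + 1) * (Real.log ((n : ℝ) + 1)) ^ (1 + β) *
        |X n ω - X0 ω|}).toReal)) :
    ∀ x : ℝ, Summable (fun n : ℕ =>
      |(P {ω | X n ω ≤ x}).toReal - (P {ω | X0 ω ≤ x}).toReal|) := by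
  intro x
  set K' := max K 0 with hK'def
  have hK'0 : 0 ≤ K' := le_max_right _ _
  have hKK' : ∀ y, f y ≤ K' := fun y => (hK y).trans (le_max_left _ _)
  rw [← summable_nat_add_iff 1]
  set c : ℕ → ℝ := fun n => ((n:ℝ) + 1 + 1) * (Real.log ((n:ℝ) + 1 + 1)) ^ (1 + β) with hcdef
  have hcpos : ∀ n : ℕ, 0 < c n := by
    intro n
    apply mul_pos (by positivity)
    apply Real.rpow_pos_of_pos
    apply Real.log_pos
    have : (0:ℝ) ≤ (n:ℝ) := Nat.cast_nonneg n
    linarith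
  have hB : Summable (fun n : ℕ =>
      (P {ω | δ ≤ ((n:ℝ) + 1 + 1) * (Real.log ((n:ℝ) + 1 + 1)) ^ (1 + β) *
        |X (n+1) ω - X0 ω|}).toReal + K' * (δ / c n)) := by
    apply Summable.add
    · have h1 := (summable_nat_add_iff 1).2 h
      refine h1.congr (fun n => ?_)
      simp only [Nat.cast_add, Nat.cast_one]
    · have hb := (summable_nat_add_iff 2).2 (bertrand_summable hβ)
      refine (hb.mul_left (K' * δ)).congr (fun n => ?_)
      have hn2 : ((n:ℝ) + 2) = (n:ℝ) + 1 + 1 := by ring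
      have hmax : max (((n + 2 : ℕ)):ℝ) 2 = (n:ℝ) + 1 + 1 := by
        push_cast
        rw [max_eq_left (by linarith [Nat.cast_nonneg (α := ℝ) n])]
        ring
      show K' * δ * ((((n + 2 : ℕ)):ℝ) * Real.log (max (((n + 2 : ℕ)):ℝ) 2) ^ (1 + β))⁻¹
          = K' * (δ / c n)
      rw [hmax, hcdef]
      push_cast
      rw [hn2]
      field_simp
  refine Summable.of_nonneg_of_le (fun n => abs_nonneg _) (fun n => ?_) hB
  have := key_ineq P (X (n+1)) X0 (hmeas (n+1)) hmeas0 f K' hK'0 hdens hKK' δ hδ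
    (c n) (hcpos n) x
  exact this
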